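/- Let p be a prime and n ≥ 1. Let s₁,…,s_{n+1} be integers with 0 ≤ s_ν < p for all ν = 1,…,n+1. If ∑_{ν=1}^{n} s_ν · φ(p^{ν-1}) = s_{n+1} · p^{n-1} (where φ is Euler's totient function and φ(p^0)=1), then s₁ = s₂ = … = s_{n+1}. -/
import Mathlib

lemma tot_key (p : ℕ) (hp : p.Prime) (i : ℕ) :
    ((p ^ (i + 1)).totient : ℤ) = (p : ℤ) ^ i * ((p : ℤ) - 1) := by
  rw [Nat.totient_prime_pow hp i.succ_pos]
  push_cast [Nat.cast_sub hp.one_le]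
  ring

lemma aux_step (p : ℕ) (hp : p.Prime) : ∀ n : ℕ, 1 ≤ n → ∀ s : ℕ → ℤ,
    (∀ ν ∈ Finset.Icc 1 (n + 1), 0 ≤ s ν ∧ s ν < (p : ℤ)) →
    (s 1 + ∑ i ∈ Finset.range (n - 1), s (i + 2) * (p : ℤ) ^ i * ((p : ℤ) - 1)
      = s (n + 1) * (p : ℤ) ^ (n - 1)) →
    ∀ k ∈ Finset.Icc 1 n, s k = s (k + 1) := by
  intro n
  induction n with
  | zero => omega
  | succ m IH =>
    intro _ s hs heq k hk
    rcases m with _ | m'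
    · simp at heq hk
      subst hk
      exact heq
    · -- n = m' + 2
      simp only [Nat.add_sub_cancel] at heq
      rw [Finset.sum_range_succ'] at heq
      set S : ℤ := ∑ i ∈ Finset.range m', s (i + 3) * (p : ℤ) ^ i * ((p : ℤ) - 1) with hSdef
      have hS : ∑ i ∈ Finset.range m', s (i + 1 + 2) * (p : ℤ) ^ (i + 1) * ((p : ℤ) - 1)
          = (p : ℤ) * S := by
        rw [hSdef, Finset.mul_sum]
        apply Finset.sum_congr rfl
        intro i _
        ring
      rw [hS] at heq
      have h1 := hs 1 (by simp)
      have h2 := hs 2 (by simp [Finset.mem_Icc])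
      have hdvd : (p : ℤ) ∣ (s 1 - s 2) := by
        refine ⟨s (m' + 3) * (p : ℤ) ^ m' - S - s 2, ?_⟩
        linear_combination heq
      have hppos : (0 : ℤ) < p := by exact_mod_cast hp.pos
      have h12 : s 1 = s 2 := by
        have := Int.eq_zero_of_abs_lt_dvd hdvd (by rw [abs_lt]; constructor <;> linarith [h1.1, h1.2, h2.1, h2.2])
        linarith
      have hp0 : (p : ℤ) ≠ 0 := ne_of_gt hppos
      have heq2 : s 2 + S = s (m' + 3) * (p : ℤ) ^ m' := by
        apply mul_left_cancel₀ hp0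
        linear_combination heq - h12
      have hIH := IH (by omega) (fun ν => s (ν + 1))
        (fun ν hν => hs (ν + 1) (by simp [Finset.mem_Icc] at hν ⊢; omega))
        (by simpa using heq2)
      simp only [Finset.mem_Icc] at hk
      rcases k with _ | _ | j
      · omega
      · exact h12
      · have := hIH (j + 1) (by simp [Finset.mem_Icc]; omega)
        simpa using this

/-- If `∑_{ν=1}^{n} s_ν φ(p^{ν-1}) = s_{n+1} p^{n-1}` with digits `0 ≤ s_ν < p`,
then all `s_ν` are equal. -/
theorem stmt_0 (p n : ℕ) (hp : p.Prime) (hn : 1 ≤ n) (s : ℕ → ℤ)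
    (hs : ∀ ν ∈ Finset.Icc 1 (n + 1), 0 ≤ s ν ∧ s ν < (p : ℤ))
    (hsum : ∑ ν ∈ Finset.Icc 1 n, s ν * (Nat.totient (p ^ (ν - 1)) : ℤ)
      = s (n + 1) * (p : ℤ) ^ (n - 1)) :
    ∀ i ∈ Finset.Icc 1 (n + 1), ∀ j ∈ Finset.Icc 1 (n + 1), s i = s j := by
  have hsum' : s 1 + ∑ i ∈ Finset.range (n - 1), s (i + 2) * (p : ℤ) ^ i * ((p : ℤ) - 1)
      = s (n + 1) * (p : ℤ) ^ (n - 1) := by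
    obtain ⟨m, rfl⟩ : ∃ m, n = m + 1 := ⟨n - 1, by omega⟩
    rw [← Finset.Ico_add_one_right_eq_Icc, Finset.sum_Ico_eq_sum_range] at hsum
    simp only [Nat.succ_sub_one, Nat.add_sub_cancel] at hsum ⊢
    rw [Finset.sum_range_succ'] at hsum
    simp only [Nat.add_sub_cancel_left] at hsum
    rw [pow_zero, Nat.totient_one] at hsum
    have : ∑ i ∈ Finset.range m, s (1 + (i + 1)) * ((p ^ (i + 1)).totient : ℤ)
        = ∑ i ∈ Finset.range m, s (i + 2) * (p : ℤ) ^ i * ((p : ℤ) - 1) := by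
      apply Finset.sum_congr rfl
      intro i _
      rw [tot_key p hp i, show (1 + (i + 1) : ℕ) = i + 2 by omega]
      ring
    rw [this] at hsum
    push_cast at hsum ⊢
    linarith [hsum]
  have hcons := aux_step p hp n hn s hs hsum'
  have key : ∀ i, 1 ≤ i → i ≤ n + 1 → s i = s 1 := by
    intro i
    induction i with
    | zero => omega
    | succ j ihj =>
      intro h1 h2
      rcases Nat.eq_zero_or_pos j with hj | hj
      · subst hj; rfl
      · have := hcons j (by simp [Finset.mem_Icc]; omega)
        rw [← this]
        exact ihj hj (by omega)
  intro i hi j hj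
  simp only [Finset.mem_Icc] at hi hj
  rw [key i hi.1 hi.2, key j hj.1 hj.2]
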